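/- The language L_R = {w·c·wᴿ | w ∈ {a,b}*} over the three-letter alphabet {a,b,c}, where wᴿ denotes the reversal of w, is NOT truth-table reducible by a Mealy machine to L_# = {0ⁿ1ⁿ | n ≥ 1}; that is, ¬(L_R ≤^A L_#). -/

import Mathlib

/-- A Mealy machine with oracle: finite state set `Q`, start state `q0`,
partial transition function `step`, output function `out`, and for each state `q`
a tuple of `numSuf q` query suffixes `suf q` together with a truth table `tt q`. -/
structure OracleMealy (α : Type) (β : Type) where
  Q : Type
  [fintypeQ : Fintype Q]
  q0 : Q
  step : Q → α → Option Q
  out : Q → α → List β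
  numSuf : Q → ℕ
  suf : (q : Q) → Fin (numSuf q) → List β
  tt : (q : Q) → (Fin (numSuf q) → Bool) → Bool

namespace OracleMealy

variable {α β : Type}

/-- Running the machine on input `w` from the start state, returning the final state
together with the string written on the oracle tape (`none` if a transition is undefined). -/
def run (M : OracleMealy α β) (w : List α) : Option (M.Q × List β) :=
  w.foldl
    (fun s a => s.bind fun qo => (M.step qo.1 a).map fun q' => (q', qo.2 ++ M.out qo.1 a))
    (some (M.q0, []))

open Classical in
/-- The machine `M` with oracle `L` accepts `w` iff the run on `w` is defined, ending in a
state `p` with output `o`, and the truth table of `p` applied to the answers of the oracle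
queries `o ++ M.suf p i ∈ L` yields `true`. -/
def Accepts (M : OracleMealy α β) (L : Set (List β)) (w : List α) : Prop :=
  ∃ p o, M.run w = some (p, o) ∧
    M.tt p (fun i => decide (o ++ M.suf p i ∈ L)) = true

end OracleMealy

/-- `L₁ ≤^A L₂`: truth-table reducibility by Mealy machines. -/
def MealyTTReducible (L₁ : Set (List α)) (L₂ : Set (List β)) : Prop :=
  ∃ M : OracleMealy α β, ∀ w : List α, w ∈ L₁ ↔ M.Accepts L₂ w

/-- The language `L_# = {0^n 1^n | n ≥ 1}` over the alphabet `{0,1}` (`false` = 0, `true` = 1). -/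
def Lsharp : Set (List Bool) :=
  {w | ∃ n : ℕ, 1 ≤ n ∧ w = List.replicate n false ++ List.replicate n true}

/-- The language `L_R = {w · c · wᴿ | w ∈ {a,b}*}` over the alphabet `{a,b,c}`,
encoded as `Fin 3` with `a = 0`, `b = 1`, `c = 2`. -/
def LR : Set (List (Fin 3)) :=
  {u | ∃ w : List (Fin 3), (∀ d ∈ w, d ≠ 2) ∧ u = w ++ [2] ++ w.reverse}

namespace LRproof

def leadF : List Bool → ℕ
  | [] => 0
  | true :: _ => 0
  | false :: l => leadF l + 1

def restF : List Bool → List Bool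
  | [] => []
  | true :: l => true :: l
  | false :: l => restF l

lemma lead_rest (o : List Bool) : List.replicate (leadF o) false ++ restF o = o := by
  induction o with
  | nil => rfl
  | cons a l ih => cases a <;> simp [leadF, restF, List.replicate_succ, ih]

lemma restF_shape (o : List Bool) : restF o = [] ∨ ∃ s, restF o = true :: s := by
  induction o with
  | nil => exact Or.inl rfl
  | cons a l ih =>
    cases a
    · simpa [restF] using ih
    · exact Or.inr ⟨l, rfl⟩

lemma leadF_le (o : List Bool) : leadF o ≤ o.length := by
  induction o with
  | nil => simp [leadF]
  | cons a l ih =>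
    cases a
    · simp [leadF]
      omega
    · simp [leadF]

lemma leadF_spec (i : ℕ) (s : List Bool) :
    leadF (List.replicate i false ++ true :: s) = i := by
  induction i with
  | zero => simp [leadF]
  | succ n ih => simpa [List.replicate_succ, leadF] using ih

lemma restF_spec (i : ℕ) (s : List Bool) :
    restF (List.replicate i false ++ true :: s) = true :: s := by
  induction i with
  | zero => simp [restF]
  | succ n ih => simpa [List.replicate_succ, restF] using ih

lemma leadF_rep (i : ℕ) : leadF (List.replicate i false) = i := by
  induction i with
  | zero => simp [leadF]
  | succ n ih => simpa [List.replicate_succ, leadF] using ih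

lemma restF_rep (i : ℕ) : restF (List.replicate i false) = [] := by
  induction i with
  | zero => simp [restF]
  | succ n ih => simpa [List.replicate_succ, restF] using ih

/-- Shape trichotomy for boolean strings. -/
lemma shape (o : List Bool) :
    (∃ i, o = List.replicate i false) ∨
    (∃ i j, 1 ≤ j ∧ o = List.replicate i false ++ List.replicate j true) ∨
    (∃ i s, false ∈ s ∧ o = List.replicate i false ++ true :: s) := by
  have hdec := lead_rest o
  rcases restF_shape o with hr | ⟨s, hr⟩
  · rw [hr, List.append_nil] at hdec
    exact Or.inl ⟨leadF o, hdec.symm⟩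
  · rw [hr] at hdec
    by_cases hall : s = List.replicate s.length true
    · refine Or.inr (Or.inl ⟨leadF o, s.length + 1, by omega, ?_⟩)
      rw [List.replicate_succ, ← hall]
      exact hdec.symm
    · refine Or.inr (Or.inr ⟨leadF o, s, ?_, hdec.symm⟩)
      by_contra hns
      exact hall (List.eq_replicate_of_mem (fun b hb => by
        cases b
        · exact absurd hb hns
        · rfl))

/-- If a list starting with `i` falses then a true equals `0^n 1^n` (n ≥ 1),
then `i = n` and the rest is `1^n`. -/
lemma lemD {i n : ℕ} {s : List Bool} (hn : 1 ≤ n)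
    (h : List.replicate i false ++ true :: s
        = List.replicate n false ++ List.replicate n true) :
    i = n ∧ true :: s = List.replicate n true := by
  obtain ⟨m, rfl⟩ : ∃ m, n = m + 1 := ⟨n - 1, by omega⟩
  have h' : List.replicate i false ++ true :: s
      = List.replicate (m + 1) false ++ true :: List.replicate m true := by
    rw [h, List.replicate_succ (a := true) (n := m)]
  have hi : i = m + 1 := by
    have := congrArg leadF h'
    simpa [leadF_spec] using this
  subst hi
  have h2 := List.append_cancel_left h'
  exact ⟨rfl, by rw [List.replicate_succ]; exact h2⟩

lemma lemA (i : ℕ) (t : List Bool) :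
    (List.replicate i false ++ t ∈ Lsharp) ↔
      ∃ a, 1 ≤ i + a ∧ t = List.replicate a false ++ List.replicate (i + a) true := by
  constructor
  · rintro ⟨m, hm, he⟩
    have hi : i ≤ m := by
      have := congrArg (List.count false) he
      simp [List.count_append, List.count_replicate] at this
      omega
    refine ⟨m - i, by omega, ?_⟩
    have hrw : List.replicate m false
        = List.replicate i false ++ List.replicate (m - i) false := by
      rw [← List.replicate_add]; congr 1; omega
    rw [hrw, List.append_assoc] at he
    have ht := List.append_cancel_left he
    rw [ht]; congr 2; omega
  · rintro ⟨a, ha, rfl⟩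
    exact ⟨i + a, ha, by rw [← List.append_assoc, ← List.replicate_add]⟩

lemma lemB {j : ℕ} (i : ℕ) (t : List Bool) (hj : 1 ≤ j) :
    (List.replicate i false ++ (List.replicate j true ++ t) ∈ Lsharp) ↔
      (j ≤ i ∧ t = List.replicate (i - j) true) := by
  constructor
  · rintro ⟨m, hm, he⟩
    obtain ⟨j', rfl⟩ : ∃ j', j = j' + 1 := ⟨j - 1, by omega⟩
    rw [List.replicate_succ, List.cons_append] at he
    obtain ⟨rfl, h2⟩ := lemD hm he
    have hlen : j' + 1 + t.length = i := by
      have := congrArg List.length h2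
      simp at this; omega
    refine ⟨by omega, ?_⟩
    have h3 : List.replicate j' true ++ t = List.replicate (i - 1) true := by
      have hi1 : i = (i - 1) + 1 := by omega
      rw [hi1, List.replicate_succ] at h2
      injection h2
    have hrw : List.replicate (i - 1) true
        = List.replicate j' true ++ List.replicate (i - 1 - j') true := by
      rw [← List.replicate_add]; congr 1; omega
    rw [hrw] at h3
    have := List.append_cancel_left h3
    rw [this]; congr 1; omega
  · rintro ⟨hji, rfl⟩
    refine ⟨i, by omega, ?_⟩
    rw [← List.replicate_add]
    congr 2
    omega

lemma lemC (i : ℕ) (s t : List Bool) (hs : false ∈ s) :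
    List.replicate i false ++ true :: (s ++ t) ∉ Lsharp := by
  rintro ⟨m, hm, he⟩
  obtain ⟨-, h2⟩ := lemD hm he
  have : false ∈ List.replicate m true := by
    rw [← h2]; exact List.mem_cons_of_mem _ (List.mem_append_left _ hs)
  exact Bool.false_ne_true (List.eq_of_mem_replicate this)

def key (o : List Bool) : ℕ :=
  if restF o = [] then 3 * leadF o + 1
  else if (restF o).length ≤ leadF o ∧ restF o = List.replicate (restF o).length true
  then 3 * (leadF o - (restF o).length) + 2 else 0

def Pk (k : ℕ) (t : List Bool) : Prop :=
  if k % 3 = 1 then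
    ∃ a, 1 ≤ k / 3 + a ∧ t = List.replicate a false ++ List.replicate (k / 3 + a) true
  else if k % 3 = 2 then t = List.replicate (k / 3) true
  else False

lemma key_le (o : List Bool) : key o ≤ 3 * o.length + 2 := by
  have := leadF_le o
  unfold key
  split
  · omega
  · split <;> omega

lemma keyA (i : ℕ) : key (List.replicate i false) = 3 * i + 1 := by
  simp [key, restF_rep, leadF_rep]

lemma keyB {j : ℕ} (i : ℕ) (hj : 1 ≤ j) :
    key (List.replicate i false ++ List.replicate j true)
      = if j ≤ i then 3 * (i - j) + 2 else 0 := by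
  obtain ⟨j', rfl⟩ : ∃ j', j = j' + 1 := ⟨j - 1, by omega⟩
  have h1 : List.replicate (j' + 1) true = true :: List.replicate j' true :=
    List.replicate_succ (a := true) (n := j')
  rw [key, h1, restF_spec, leadF_spec]
  have hlen : (true :: List.replicate j' true).length = j' + 1 := by simp
  rw [hlen]
  have h2 : (true :: List.replicate j' true) = List.replicate (j' + 1) true := h1.symm
  simp only [if_neg (by simp : ¬(true :: List.replicate j' true = []))]
  by_cases hji : j' + 1 ≤ i
  · rw [if_pos ⟨hji, h2⟩, if_pos hji]
  · rw [if_neg (by tauto), if_neg hji]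

lemma keyC (i : ℕ) {s : List Bool} (hs : false ∈ s) :
    key (List.replicate i false ++ true :: s) = 0 := by
  rw [key, restF_spec, leadF_spec]
  rw [if_neg (by simp), if_neg]
  rintro ⟨-, h2⟩
  have : false ∈ List.replicate (true :: s).length true := by
    rw [← h2]; exact List.mem_cons_of_mem _ hs
  exact Bool.false_ne_true (List.eq_of_mem_replicate this)

lemma mem_key (o t : List Bool) : (o ++ t ∈ Lsharp) ↔ Pk (key o) t := by
  rcases shape o with ⟨i, rfl⟩ | ⟨i, j, hj, rfl⟩ | ⟨i, s, hs, rfl⟩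
  · rw [keyA]
    have h1 : (3 * i + 1) % 3 = 1 := by omega
    have h2 : (3 * i + 1) / 3 = i := by omega
    simp only [Pk, h1, h2, if_pos rfl]
    exact lemA i t
  · rw [keyB i hj, List.append_assoc, lemB i t hj]
    by_cases hji : j ≤ i
    · rw [if_pos hji]
      have h1 : (3 * (i - j) + 2) % 3 = 2 := by omega
      have h2 : (3 * (i - j) + 2) / 3 = i - j := by omega
      simp only [Pk, h1, h2]
      norm_num
      tauto
    · rw [if_neg hji]
      simp only [Pk]
      norm_num
      omega
  · rw [keyC i hs]
    simp only [Pk]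
    norm_num
    exact lemC i s t hs

lemma key_congr {o o' : List Bool} (h : key o = key o') (t : List Bool) :
    (o ++ t ∈ Lsharp) ↔ (o' ++ t ∈ Lsharp) := by
  rw [mem_key, mem_key, h]

lemma exists_big (c : ℕ) : ∃ n, c * (n + 1) < 2 ^ n := by
  refine ⟨2 * c + 2, ?_⟩
  have h1 : c < 2 ^ c := (Nat.lt_two_pow_self (n := c))
  have h2 : 2 * c + 3 ≤ 2 ^ (c + 2) := by
    have : c + 1 ≤ 2 ^ c := h1
    calc 2 * c + 3 ≤ 4 * (c + 1) := by omega
    _ ≤ 4 * 2 ^ c := by omega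
    _ = 2 ^ (c + 2) := by ring
  calc c * (2 * c + 2 + 1) < 2 ^ c * (2 * c + 3) :=
        Nat.mul_lt_mul_of_lt_of_le h1 (le_refl _) (by omega)
    _ ≤ 2 ^ c * 2 ^ (c + 2) := Nat.mul_le_mul_left _ h2
    _ = 2 ^ (2 * c + 2) := by rw [← pow_add]; ring_nf

end LRproof

namespace LRproof

variable {α β : Type} (M : OracleMealy α β)

def stepf : Option (M.Q × List β) → α → Option (M.Q × List β) :=
  fun s a => s.bind fun qo => (M.step qo.1 a).map fun q' => (q', qo.2 ++ M.out qo.1 a)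

lemma run_eq_foldl (w : List α) :
    M.run w = w.foldl (stepf M) (some (M.q0, [])) := rfl

def runFrom (q : M.Q) (w : List α) : Option (M.Q × List β) :=
  w.foldl (stepf M) (some (q, []))

lemma foldl_none (w : List α) : w.foldl (stepf M) none = none := by
  induction w with
  | nil => rfl
  | cons a w ih => simpa [stepf] using ih

lemma foldl_shift (w : List α) :
    ∀ (q : M.Q) (o : List β),
      w.foldl (stepf M) (some (q, o))
        = (runFrom M q w).map (fun pt => (pt.1, o ++ pt.2)) := by
  induction w with
  | nil => intro q o; simp [runFrom]
  | cons a w ih =>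
    intro q o
    rw [List.foldl_cons]
    have hstep : ∀ o' : List β, stepf M (some (q, o')) a
        = (M.step q a).map fun q' => (q', o' ++ M.out q a) := fun _ => rfl
    cases hq : M.step q a with
    | none =>
      rw [show stepf M (some (q, o)) a = none by rw [hstep, hq]; rfl, foldl_none]
      rw [runFrom, List.foldl_cons,
        show stepf M (some (q, [])) a = none by rw [hstep, hq]; rfl, foldl_none]
      rfl
    | some q' =>
      have hL : stepf M (some (q, o)) a = some (q', o ++ M.out q a) := by
        rw [hstep, hq]; rfl
      have hR : runFrom M q (a :: w) = List.foldl (stepf M) (some (q', M.out q a)) w := by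
        rw [runFrom, List.foldl_cons]
        congr 1
        rw [hstep, hq]; simp
      rw [hL, ih q' (o ++ M.out q a), hR, ih q' (M.out q a)]
      cases runFrom M q' w with
      | none => rfl
      | some pt => simp

lemma run_append (u v : List α) :
    M.run (u ++ v) = v.foldl (stepf M) (M.run u) := by
  rw [run_eq_foldl, run_eq_foldl, List.foldl_append]

lemma runFrom_len {K : ℕ} (hK : ∀ q a, (M.out q a).length ≤ K) :
    ∀ (w : List α) (q p : M.Q) (o : List β),
      runFrom M q w = some (p, o) → o.length ≤ w.length * K := by
  intro w
  induction w with
  | nil =>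
    intro q p o h
    rw [runFrom] at h
    simp at h
    simp [h.2.symm]
  | cons a w ih =>
    intro q p o h
    rw [runFrom, List.foldl_cons] at h
    cases hq : M.step q a with
    | none =>
      rw [show stepf M (some (q, [])) a = none by simp [stepf, hq], foldl_none] at h
      exact absurd h (by simp)
    | some q' =>
      rw [show stepf M (some (q, [])) a = some (q', M.out q a) by simp [stepf, hq],
        foldl_shift] at h
      cases hr : runFrom M q' w with
      | none => rw [hr] at h; exact absurd h (by simp)
      | some pt =>
        rw [hr] at h
        simp at h
        obtain ⟨-, ho⟩ := h
        have h1 := ih q' pt.1 pt.2 (by rw [hr])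
        have h2 := hK q a
        rw [← ho]
        simp [List.length_append]
        have h3 : (w.length + 1) * K = w.length * K + K := by ring
        omega

end LRproof

namespace LRproof

def enc (w : List Bool) : List (Fin 3) := w.map (fun b => if b then 1 else 0)

lemma enc_no2 {w : List Bool} : ∀ d ∈ enc w, d ≠ 2 := by
  intro d hd
  simp only [enc, List.mem_map] at hd
  obtain ⟨b, -, rfl⟩ := hd
  cases b <;> decide

lemma enc_inj : Function.Injective enc := by
  apply List.map_injective_iff.mpr
  intro a b hab
  cases a <;> cases b <;> simp_all

lemma enc_len (w : List Bool) : (enc w).length = w.length := by simp [enc]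

lemma split2 : ∀ (a c : List (Fin 3)) {b d : List (Fin 3)},
    (∀ x ∈ a, x ≠ 2) → (∀ x ∈ c, x ≠ 2) →
    a ++ [2] ++ b = c ++ [2] ++ d → a = c ∧ b = d := by
  intro a
  induction a with
  | nil =>
    intro c b d _ hc h
    cases c with
    | nil => exact ⟨rfl, by simpa using h⟩
    | cons e c' =>
      exfalso
      simp only [List.nil_append, List.cons_append, List.cons.injEq] at h
      exact hc e (by simp) h.1.symm
  | cons e a' ih =>
    intro c b d ha hc h
    cases c with
    | nil =>
      exfalso
      simp only [List.nil_append, List.cons_append, List.cons.injEq] at h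
      exact ha e (by simp) h.1
    | cons e' c' =>
      simp only [List.cons_append, List.cons.injEq] at h
      obtain ⟨rfl, h2⟩ := h
      have := ih c' (fun x hx => ha x (List.mem_cons_of_mem _ hx))
        (fun x hx => hc x (List.mem_cons_of_mem _ hx))
        (by simpa [List.cons_append] using h2)
      exact ⟨by rw [this.1], this.2⟩

end LRproof


/-- `L_R` is not truth-table reducible by a Mealy machine to `L_#`. -/
theorem LR_not_mealyTTReducible_Lsharp : ¬ MealyTTReducible LR Lsharp := by
  rintro ⟨M, H⟩
  haveI := M.fintypeQ
  classical
  open LRproof in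
  obtain ⟨K, hK⟩ : ∃ K, ∀ q a, (M.out q a).length ≤ K :=
    ⟨Finset.univ.sup (fun qa : M.Q × Fin 3 => (M.out qa.1 qa.2).length), fun q a =>
      Finset.le_sup (f := fun qa : M.Q × Fin 3 => (M.out qa.1 qa.2).length)
        (Finset.mem_univ (q, a))⟩
  obtain ⟨n, hn⟩ := LRproof.exists_big (Fintype.card M.Q * (3 * K + 3))
  set B := 3 * ((n + 1) * K) + 2 with hB
  -- every palindrome-with-center word is in LR
  have hmem : ∀ w : List Bool,
      LRproof.enc w ++ [2] ++ (LRproof.enc w).reverse ∈ LR :=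
    fun w => ⟨LRproof.enc w, fun d hd => LRproof.enc_no2 d hd, rfl⟩
  -- the run on the prefix w·c is defined
  have hpref : ∀ w : List Bool, ∃ qo : M.Q × List Bool,
      M.run (LRproof.enc w ++ [2]) = some qo := by
    intro w
    obtain ⟨p, O, hrun, -⟩ := (H _).1 (hmem w)
    rw [LRproof.run_append M (LRproof.enc w ++ [2]) ((LRproof.enc w).reverse)] at hrun
    cases hru : M.run (LRproof.enc w ++ [2]) with
    | none =>
      rw [hru, LRproof.foldl_none] at hrun
      exact absurd hrun (by simp)
    | some qo => exact ⟨qo, rfl⟩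
  choose f hf using hpref
  -- length bound on the oracle tape after reading w·c
  have hflen : ∀ w : List Bool, (f w).2.length ≤ (w.length + 1) * K := by
    intro w
    have hrf : LRproof.runFrom M M.q0 (LRproof.enc w ++ [2]) = some ((f w).1, (f w).2) := by
      rw [← hf w]; rfl
    have := LRproof.runFrom_len M hK (LRproof.enc w ++ [2]) M.q0 (f w).1 (f w).2 hrf
    simpa [LRproof.enc_len] using this
  -- pigeonhole
  have hcard : Fintype.card (M.Q × Fin (B + 1)) < Fintype.card (Fin n → Bool) := by
    have e1 : Fintype.card (M.Q × Fin (B + 1)) = Fintype.card M.Q * (B + 1) := by simp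
    have e2 : Fintype.card (Fin n → Bool) = 2 ^ n := by simp
    rw [e1, e2]
    have e3 : B + 1 ≤ (3 * K + 3) * (n + 1) := by
      have : (3 * K + 3) * (n + 1) = 3 * ((n + 1) * K) + 3 + 3 * n := by ring
      omega
    calc Fintype.card M.Q * (B + 1) ≤ Fintype.card M.Q * ((3 * K + 3) * (n + 1)) :=
          Nat.mul_le_mul_left _ e3
      _ = Fintype.card M.Q * (3 * K + 3) * (n + 1) := by ring
      _ < 2 ^ n := hn
  obtain ⟨x, y, hxy, hgeq⟩ := Fintype.exists_ne_map_eq_of_card_lt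
    (fun x : Fin n → Bool =>
      ((f (List.ofFn x)).1,
        (⟨min (LRproof.key (f (List.ofFn x)).2) B,
          Nat.lt_succ_of_le (Nat.min_le_right _ _)⟩ : Fin (B + 1))))
    hcard
  set w := List.ofFn x with hw
  set w' := List.ofFn y with hw'
  have hkB : ∀ z : Fin n → Bool, LRproof.key (f (List.ofFn z)).2 ≤ B := by
    intro z
    have h1 := LRproof.key_le (f (List.ofFn z)).2
    have h2 := hflen (List.ofFn z)
    simp only [List.length_ofFn] at h2
    omega
  have h1 : (f w).1 = (f w').1 := congrArg (fun z : M.Q × Fin (B + 1) => z.1) hgeq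
  have hkey : LRproof.key (f w).2 = LRproof.key (f w').2 := by
    have h2 := congrArg (fun z : M.Q × Fin (B + 1) => (z.2).val) hgeq
    simp only at h2
    rw [Nat.min_eq_left (hkB x), Nat.min_eq_left (hkB y)] at h2
    exact h2
  -- acceptance of w c wᴿ
  obtain ⟨p, O, hrO, htt⟩ := (H _).1 (hmem w)
  have hfw : M.run (LRproof.enc w ++ [2]) = some ((f w).1, (f w).2) := by
    rw [hf w]
  have hfull : M.run (LRproof.enc w ++ [2] ++ (LRproof.enc w).reverse)
      = (LRproof.runFrom M (f w).1 ((LRproof.enc w).reverse)).map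
          (fun pt => (pt.1, (f w).2 ++ pt.2)) := by
    rw [LRproof.run_append M (LRproof.enc w ++ [2]) ((LRproof.enc w).reverse), hfw,
      LRproof.foldl_shift]
  cases hrev : LRproof.runFrom M (f w).1 ((LRproof.enc w).reverse) with
  | none =>
    rw [hrev] at hfull
    rw [hfull] at hrO
    exact absurd hrO (by simp)
  | some pt =>
    obtain ⟨p0, t⟩ := pt
    rw [hrev] at hfull
    simp only [Option.map_some] at hfull
    rw [hfull] at hrO
    have hp : p0 = p := (Prod.mk.injEq .. ▸ Option.some.inj hrO).1
    have hO : (f w).2 ++ t = O := (Prod.mk.injEq .. ▸ Option.some.inj hrO).2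
    subst hp
    -- acceptance of w' c wᴿ
    have hfw' : M.run (LRproof.enc w' ++ [2]) = some ((f w').1, (f w').2) := by
      rw [hf w']
    have hfull' : M.run (LRproof.enc w' ++ [2] ++ (LRproof.enc w).reverse)
        = some (p0, (f w').2 ++ t) := by
      rw [LRproof.run_append M (LRproof.enc w' ++ [2]) ((LRproof.enc w).reverse), hfw',
        LRproof.foldl_shift, ← h1, hrev]
      rfl
    have hacc' : M.Accepts Lsharp (LRproof.enc w' ++ [2] ++ (LRproof.enc w).reverse) := by
      refine ⟨p0, (f w').2 ++ t, hfull', ?_⟩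
      have hfun : (fun i => decide ((f w').2 ++ t ++ M.suf p0 i ∈ Lsharp))
          = (fun i => decide (O ++ M.suf p0 i ∈ Lsharp)) := by
        funext i
        apply decide_eq_decide.mpr
        rw [← hO, List.append_assoc, List.append_assoc]
        exact LRproof.key_congr hkey.symm (t ++ M.suf p0 i)
      rw [hfun]
      exact htt
    obtain ⟨v, hv, he⟩ := (H _).2 hacc'
    obtain ⟨hv1, hv2⟩ := LRproof.split2 (LRproof.enc w') v
      (fun d hd => LRproof.enc_no2 d hd) hv he
    have hvw : LRproof.enc w = v := List.reverse_injective hv2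
    have : w = w' := LRproof.enc_inj (by rw [hvw, hv1])
    exact hxy (List.ofFn_injective (by rw [← hw, ← hw', this]))
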